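/- Fix an integer t ≥ 1. For every integer m ≥ 1, C_m = { x ∈ ℝ^{t+1} : x_0 ≥ x_1 ≥ … ≥ x_{t−1} ≥ 0, ⟨u_l, x⟩ ≥ 0 for all 0 ≤ l ≤ m−1, and ⟨u_l, x⟩ < 0 for all l ≥ m }; that is, the half-open cone C_m is also cut out by this infinite system of linear inequalities. -/

import Mathlib

/-- The generator `v_i ∈ ℝ^{t+1}`: coordinates `0,…,(i-1) mod t` equal `1`, the remaining
coordinates among `0,…,t-1` equal `0`, and the last coordinate equals `((i-1) div t)·t`. -/
noncomputable def geneV (t : ℕ) (i : ℕ) : Fin (t + 1) → ℝ := fun l =>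
  if (l : ℕ) = t then (((i - 1) / t) * t : ℕ)
  else if (l : ℕ) ≤ (i - 1) % t then 1 else 0

/-- The half-open simplicial cone `C_m`, generated by `v_m, …, v_{m+t}` with the facet
opposite the first generator open. -/
noncomputable def coneC (t : ℕ) (m : ℕ) : Set (Fin (t + 1) → ℝ) :=
  { x | ∃ α : Fin (t + 1) → ℝ, 0 < α 0 ∧ (∀ i, 0 ≤ α i) ∧
      x = ∑ i : Fin (t + 1), α i • geneV t (m + (i : ℕ)) }

/-- The normal vector `u_l = -((l div t)+1)·t·e₀ + t·e_{l mod t} + e_t`. -/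
noncomputable def normalU (t : ℕ) (l : ℕ) : Fin (t + 1) → ℝ := fun j =>
  (if (j : ℕ) = 0 then -(((l / t + 1) * t : ℕ) : ℝ) else 0)
    + (if (j : ℕ) = l % t then (t : ℝ) else 0)
    + (if (j : ℕ) = t then 1 else 0)

/-- Standard inner product on `ℝ^{t+1}`. -/
noncomputable def sprod {n : ℕ} (u x : Fin n → ℝ) : ℝ := ∑ j, u j * x j

lemma sum_ite_coord {t : ℕ} (x : Fin (t+1) → ℝ) (a : Fin (t+1)) (c : ℝ) :
    ∑ j : Fin (t+1), (if (j:ℕ) = (a:ℕ) then c else 0) * x j = c * x a := by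
  rw [Finset.sum_eq_single a]
  · simp
  · intro j _ hj
    rw [if_neg (by simpa [Fin.val_eq_val] using hj), zero_mul]
  · simp

lemma sprod_formula {t : ℕ} (ht : 1 ≤ t) (l : ℕ) (x : Fin (t+1) → ℝ) :
    sprod (normalU t l) x
      = -(((l / t + 1) * t : ℕ) : ℝ) * x ⟨0, by omega⟩
        + (t : ℝ) * x ⟨l % t, by have := Nat.mod_lt l (show 0 < t by omega); omega⟩
        + x ⟨t, by omega⟩ := by
  unfold sprod
  rw [Finset.sum_congr rfl (fun j _ => show normalU t l j * x j
      = (if (j:ℕ) = 0 then -(((l / t + 1) * t : ℕ) : ℝ) else 0) * x j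
        + (if (j:ℕ) = l % t then (t:ℝ) else 0) * x j
        + (if (j:ℕ) = t then (1:ℝ) else 0) * x j from by unfold normalU; ring)]
  rw [Finset.sum_add_distrib, Finset.sum_add_distrib]
  rw [show ∑ j : Fin (t+1), (if (j:ℕ) = 0 then -(((l / t + 1) * t : ℕ) : ℝ) else 0) * x j
      = ∑ j : Fin (t+1), (if (j:ℕ) = ((⟨0, by omega⟩ : Fin (t+1)):ℕ) then -(((l / t + 1) * t : ℕ) : ℝ) else 0) * x j from rfl,
    sum_ite_coord]
  rw [show ∑ j : Fin (t+1), (if (j:ℕ) = l % t then (t:ℝ) else 0) * x j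
      = ∑ j : Fin (t+1), (if (j:ℕ) = ((⟨l % t, by have := Nat.mod_lt l (show 0 < t by omega); omega⟩ : Fin (t+1)):ℕ) then (t:ℝ) else 0) * x j from rfl,
    sum_ite_coord]
  rw [show ∑ j : Fin (t+1), (if (j:ℕ) = t then (1:ℝ) else 0) * x j
      = ∑ j : Fin (t+1), (if (j:ℕ) = ((⟨t, by omega⟩ : Fin (t+1)):ℕ) then (1:ℝ) else 0) * x j from rfl,
    sum_ite_coord]
  ring

lemma geneV_last {t i : ℕ} (ht : 1 ≤ t) : geneV t i ⟨t, by omega⟩ = (((i - 1) / t * t : ℕ) : ℝ) := by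
  simp [geneV]

lemma geneV_lt {t i k : ℕ} (hk : k < t) (h : k < t + 1) :
    geneV t i ⟨k, h⟩ = if k ≤ (i - 1) % t then 1 else 0 := by
  simp [geneV, Nat.ne_of_lt hk]

lemma sprod_uv {t : ℕ} (ht : 1 ≤ t) (l i : ℕ) :
    sprod (normalU t l) (geneV t i)
      = -(((l / t + 1) * t : ℕ) : ℝ) + (t:ℝ) * (if l % t ≤ (i-1) % t then 1 else 0)
        + (((i-1)/t * t : ℕ) : ℝ) := by
  rw [sprod_formula ht]
  rw [geneV_lt (show 0 < t by omega), geneV_lt (Nat.mod_lt l (by omega)), geneV_last ht]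
  simp

lemma sprod_uv_int {t : ℕ} (ht : 1 ≤ t) {l i : ℕ} (hi : 1 ≤ i) :
    sprod (normalU t l) (geneV t i) = (((t : ℤ) * (((i:ℤ) - 1 - (l:ℤ)) / t) : ℤ) : ℝ) := by
  rw [sprod_uv ht]
  set q := (i-1)/t with hqdef
  set r := (i-1)%t with hrdef
  set p := l/t with hpdef
  set s := l%t with hsdef
  have hq : i - 1 = t*q + r := (Nat.div_add_mod _ _).symm
  have hp : l = t*p + s := (Nat.div_add_mod _ _).symm
  have hrt : r < t := Nat.mod_lt _ (by omega)
  have hst : s < t := Nat.mod_lt _ (by omega)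
  have hiz : (i:ℤ) - 1 = (t:ℤ)*q + r := by
    have h0 : ((i-1:ℕ):ℤ) = (i:ℤ) - 1 := by
      rw [Nat.cast_sub hi]; norm_num
    rw [← h0, hq]; push_cast; ring
  have hlz : (l:ℤ) = (t:ℤ)*p + s := by rw [hp]; push_cast; ring
  have htz : (t:ℤ) ≠ 0 := by
    have : (1:ℤ) ≤ t := by exact_mod_cast ht
    omega
  by_cases hc : s ≤ r
  · rw [if_pos hc]
    have e1 : (i:ℤ) - 1 - l = ((r:ℤ) - s) + ((q:ℤ) - p)*t := by rw [hiz, hlz]; ring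
    rw [e1, Int.add_mul_ediv_right _ _ htz,
      Int.ediv_eq_zero_of_lt
        (by have : (s:ℤ) ≤ r := by exact_mod_cast hc
            omega)
        (by have : (r:ℤ) < t := by exact_mod_cast hrt
            have : (0:ℤ) ≤ s := by positivity
            omega)]
    push_cast
    ring
  · rw [if_neg hc]
    push_neg at hc
    have e1 : (i:ℤ) - 1 - l = ((r:ℤ) - s + t) + ((q:ℤ) - p - 1)*t := by rw [hiz, hlz]; ring
    have hrs : (r:ℤ) < s := by exact_mod_cast hc
    have hstz : (s:ℤ) < t := by exact_mod_cast hst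
    rw [e1, Int.add_mul_ediv_right _ _ htz,
      Int.ediv_eq_zero_of_lt (by omega) (by omega)]
    push_cast
    ring

lemma sprod_uv_nonneg {t : ℕ} (ht : 1 ≤ t) {l i : ℕ} (hi : 1 ≤ i) (h : l < i) :
    0 ≤ sprod (normalU t l) (geneV t i) := by
  rw [sprod_uv_int ht hi]
  have h0 : (0:ℤ) ≤ (t:ℤ) * (((i:ℤ) - 1 - l) / t) :=
    mul_nonneg (by positivity) (Int.ediv_nonneg (by omega) (by positivity))
  exact_mod_cast h0

lemma sprod_uv_le_neg {t : ℕ} (ht : 1 ≤ t) {l i : ℕ} (hi : 1 ≤ i) (h : i ≤ l) :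
    sprod (normalU t l) (geneV t i) ≤ -(t:ℝ) := by
  rw [sprod_uv_int ht hi]
  have h1 : ((i:ℤ) - 1 - l) / t < 0 :=
    Int.ediv_neg_of_neg_of_pos (by omega) (by exact_mod_cast (by omega : 0 < t))
  have h0 : (t:ℤ) * (((i:ℤ) - 1 - l) / t) ≤ (t:ℤ) * (-1) := by
    apply mul_le_mul_of_nonneg_left (by omega) (by positivity)
  calc ((((t:ℤ) * (((i:ℤ) - 1 - l) / t)) : ℤ) : ℝ) ≤ (((t:ℤ) * (-1) : ℤ) : ℝ) := by exact_mod_cast h0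
    _ = -(t:ℝ) := by push_cast; ring

lemma sprod_uv_nonpos {t : ℕ} (ht : 1 ≤ t) {l i : ℕ} (hi : 1 ≤ i) (h : i ≤ l + t) :
    sprod (normalU t l) (geneV t i) ≤ 0 := by
  rw [sprod_uv_int ht hi]
  have h1 : ((i:ℤ) - 1 - l) / t ≤ 0 := by
    by_cases hc : (i:ℤ) - 1 - l < 0
    · exact le_of_lt (Int.ediv_neg_of_neg_of_pos hc (by exact_mod_cast (by omega : 0 < t)))
    · push_neg at hc
      rw [Int.ediv_eq_zero_of_lt hc (by omega)]
  have h0 : (t:ℤ) * (((i:ℤ) - 1 - l) / t) ≤ 0 :=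
    mul_nonpos_of_nonneg_of_nonpos (by positivity) h1
  exact_mod_cast h0

lemma sprod_sum {n : ℕ} {ι : Type*} (s : Finset ι) (u : Fin n → ℝ) (α : ι → ℝ)
    (V : ι → Fin n → ℝ) :
    sprod u (∑ i ∈ s, α i • V i) = ∑ i ∈ s, α i * sprod u (V i) := by
  unfold sprod
  simp only [Finset.sum_apply, Pi.smul_apply, smul_eq_mul, Finset.mul_sum]
  rw [Finset.sum_comm]
  exact Finset.sum_congr rfl fun i _ => Finset.sum_congr rfl fun j _ => by ring

lemma geneV_coord {t n : ℕ} (j : Fin (t+1)) (hj : (j:ℕ) < t) :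
    geneV t n j = if (j:ℕ) ≤ (n-1) % t then 1 else 0 := by
  simp [geneV, Nat.ne_of_lt hj]

lemma forward_dir (t : ℕ) (ht : 1 ≤ t) (m : ℕ) (hm : 1 ≤ m) (x : Fin (t + 1) → ℝ)
    (hx : x ∈ coneC t m) :
    (∀ i j : Fin (t + 1), i ≤ j → (j : ℕ) < t → x j ≤ x i) ∧
    (∀ i : Fin (t + 1), (i : ℕ) < t → 0 ≤ x i) ∧
    (∀ l : ℕ, l < m → 0 ≤ sprod (normalU t l) x) ∧
    (∀ l : ℕ, m ≤ l → sprod (normalU t l) x < 0) := by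
  obtain ⟨α, hα0, hαnn, hxeq⟩ := hx
  have hcoord : ∀ k : Fin (t+1), x k = ∑ i : Fin (t+1), α i * geneV t (m + (i:ℕ)) k := by
    intro k
    rw [hxeq]
    simp [Finset.sum_apply]
  refine ⟨?_, ?_, ?_, ?_⟩
  · intro i j hij hj
    rw [hcoord i, hcoord j]
    apply Finset.sum_le_sum
    intro b _
    apply mul_le_mul_of_nonneg_left _ (hαnn b)
    rw [geneV_coord j hj, geneV_coord i (lt_of_le_of_lt (Fin.le_def.mp hij) hj)]
    split_ifs with h1 h2 <;> try norm_num
    exact absurd (le_trans (Fin.le_def.mp hij) h1) h2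
  · intro i hi
    rw [hcoord i]
    apply Finset.sum_nonneg
    intro b _
    apply mul_nonneg (hαnn b)
    rw [geneV_coord i hi]
    split_ifs <;> norm_num
  · intro l hl
    rw [hxeq, sprod_sum]
    apply Finset.sum_nonneg
    intro b _
    exact mul_nonneg (hαnn b) (sprod_uv_nonneg ht (by omega) (by omega))
  · intro l hl
    rw [hxeq, sprod_sum, Fin.sum_univ_succ]
    have h1 : α 0 * sprod (normalU t l) (geneV t (m + ((0 : Fin (t+1)):ℕ))) ≤ α 0 * (-(t:ℝ)) := by
      apply mul_le_mul_of_nonneg_left _ (le_of_lt hα0)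
      exact sprod_uv_le_neg ht (by simp; omega) (by simp; omega)
    have h2 : ∑ i : Fin t, α i.succ * sprod (normalU t l) (geneV t (m + ((i.succ : Fin (t+1)):ℕ))) ≤ 0 := by
      apply Finset.sum_nonpos
      intro b _
      apply mul_nonpos_of_nonneg_of_nonpos (hαnn _)
      apply sprod_uv_nonpos ht (by omega)
      have : ((b.succ : Fin (t+1)):ℕ) ≤ t := by omega
      omega
    have htR : (0:ℝ) < t := by exact_mod_cast (by omega : 0 < t)
    have h3 : α 0 * (-(t:ℝ)) < 0 := mul_neg_of_pos_of_neg hα0 (by linarith)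
    linarith

lemma succ_mod {t : ℕ} (ht : 1 ≤ t) (v : ℕ) :
    (v+1) % t = if v % t + 1 = t then 0 else v % t + 1 := by
  have h1 := Nat.div_add_mod v t
  have h2 := Nat.mod_lt v (show 0 < t by omega)
  split_ifs with h
  · have e : t * (v/t + 1) = t * (v/t) + t := by ring
    have : v + 1 = t * (v/t + 1) := by omega
    rw [this, Nat.mul_mod_right]
  · have : v + 1 = t * (v/t) + (v % t + 1) := by omega
    rw [this, Nat.mul_add_mod, Nat.mod_eq_of_lt (by omega)]

lemma succ_div {t : ℕ} (ht : 1 ≤ t) (v : ℕ) :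
    (v+1) / t = if v % t + 1 = t then v/t + 1 else v/t := by
  have h1 := Nat.div_add_mod v t
  have h2 := Nat.mod_lt v (show 0 < t by omega)
  split_ifs with h
  · have e : t * (v/t + 1) = t * (v/t) + t := by ring
    have : v + 1 = t * (v/t + 1) := by omega
    rw [this, Nat.mul_div_cancel_left _ (show 0 < t by omega)]
  · have : v + 1 = t * (v/t) + (v % t + 1) := by omega
    rw [this, Nat.mul_add_div (show 0 < t by omega),
      Nat.div_eq_of_lt (show v % t + 1 < t by omega)]
    omega

lemma geneV_succ_sub {t v : ℕ} (ht : 1 ≤ t) {k : Fin (t+1)} (hk : (k:ℕ) < t) :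
    geneV t (v+2) k - geneV t (v+1) k
      = (if (v+1) % t = (k:ℕ) then 1 else 0) - (if (v+1) % t = 0 then 1 else 0) := by
  rw [geneV_coord k hk, geneV_coord k hk]
  have e1 : v + 2 - 1 = v + 1 := by omega
  have e2 : v + 1 - 1 = v := by omega
  rw [e1, e2, succ_mod ht v]
  have h2 := Nat.mod_lt v (show 0 < t by omega)
  split_ifs <;> first | omega | exact (‹False›).elim | (norm_num; done)

lemma geneV_succ_sub_last {t v : ℕ} (ht : 1 ≤ t) :
    geneV t (v+2) ⟨t, by omega⟩ - geneV t (v+1) ⟨t, by omega⟩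
      = if (v+1) % t = 0 then (t:ℝ) else 0 := by
  rw [geneV_last ht, geneV_last ht]
  have e1 : v + 2 - 1 = v + 1 := by omega
  have e2 : v + 1 - 1 = v := by omega
  rw [e1, e2, succ_div ht v, succ_mod ht v]
  split_ifs <;> first | omega | exact (‹False›).elim | (push_cast; ring)

lemma mod_inj_window {t m n₁ n₂ : ℕ} (ht : 1 ≤ t) (h1 : m ≤ n₁) (h2 : n₁ < m + t)
    (h3 : m ≤ n₂) (h4 : n₂ < m + t) (h5 : n₁ % t = n₂ % t) : n₁ = n₂ := by
  have e1 := Nat.div_add_mod n₁ t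
  have e2 := Nat.div_add_mod n₂ t
  rcases lt_trichotomy (n₁/t) (n₂/t) with h|h|h
  · exfalso
    have := Nat.mul_le_mul_left t (show n₁/t + 1 ≤ n₂/t from h)
    have e : t * (n₁/t + 1) = t * (n₁/t) + t := by ring
    omega
  · rw [h] at e1; omega
  · exfalso
    have := Nat.mul_le_mul_left t (show n₂/t + 1 ≤ n₁/t from h)
    have e : t * (n₂/t + 1) = t * (n₂/t) + t := by ring
    omega

lemma window_sum {t m : ℕ} (f : ℕ → ℝ) (r : ℕ) (ht : 1 ≤ t) (N : ℕ)
    (hN1 : m ≤ N) (hN2 : N < m + t) (hN3 : N % t = r) :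
    ∑ i ∈ Finset.range t, f (m + i) * (if (m + i) % t = r then 1 else 0) = f N := by
  have key : ∑ n ∈ Finset.Ico m (m+t), f n * (if n % t = r then 1 else 0) = f N := by
    rw [Finset.sum_eq_single_of_mem N (Finset.mem_Ico.mpr ⟨hN1, hN2⟩)]
    · rw [if_pos hN3, mul_one]
    · intro n hn hne
      rw [if_neg, mul_zero]
      intro hcon
      exact hne (mod_inj_window ht (Finset.mem_Ico.mp hn).1 (Finset.mem_Ico.mp hn).2 hN1 hN2
        (hcon.trans hN3.symm))
  rw [← key, Finset.sum_Ico_eq_sum_range]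
  simp

lemma sprod_formula' {t : ℕ} (ht : 1 ≤ t) (l : ℕ) (x : Fin (t+1) → ℝ) {a ρ : ℕ}
    (hdiv : l / t = a) (hmod : l % t = ρ) (hρ : ρ < t + 1) :
    sprod (normalU t l) x
      = -(((a + 1) * t : ℕ) : ℝ) * x ⟨0, by omega⟩ + (t : ℝ) * x ⟨ρ, hρ⟩ + x ⟨t, by omega⟩ := by
  subst hdiv; subst hmod
  exact sprod_formula ht l x

lemma B_antitone {t : ℕ} (ht : 1 ≤ t) (x : Fin (t+1) → ℝ)
    (hmono : ∀ i j : Fin (t + 1), i ≤ j → (j : ℕ) < t → x j ≤ x i)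
    (hpos : ∀ i : Fin (t + 1), (i : ℕ) < t → 0 ≤ x i) (n : ℕ) :
    sprod (normalU t (n+1)) x ≤ sprod (normalU t n) x := by
  have hρ : n % t < t := Nat.mod_lt _ (by omega)
  have htR : (0:ℝ) < t := by exact_mod_cast (show 0 < t by omega)
  by_cases hc : n % t + 1 = t
  · rw [sprod_formula' ht n x rfl rfl (by omega),
      sprod_formula' ht (n+1) x (by rw [succ_div ht n, if_pos hc])
        (by rw [succ_mod ht n, if_pos hc]) (by omega)]
    have hxρ : 0 ≤ x ⟨n % t, by omega⟩ := hpos ⟨n % t, by omega⟩ hρ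
    push_cast
    nlinarith [mul_nonneg htR.le hxρ]
  · rw [sprod_formula' ht n x rfl rfl (by omega),
      sprod_formula' ht (n+1) x (by rw [succ_div ht n, if_neg hc])
        (by rw [succ_mod ht n, if_neg hc]) (by omega)]
    have hm' : x ⟨n % t + 1, by omega⟩ ≤ x ⟨n % t, by omega⟩ := by
      apply hmono ⟨n % t, by omega⟩ ⟨n % t + 1, by omega⟩ (by simp [Fin.le_def]) (by simp; omega)
    push_cast
    nlinarith [mul_le_mul_of_nonneg_left hm' htR.le]

/-- `C_m` is also cut out by the infinite system of inequalities
`x₀ ≥ … ≥ x_{t-1} ≥ 0`, `⟨u_l,x⟩ ≥ 0` for `0 ≤ l ≤ m-1` and `⟨u_l,x⟩ < 0` for `l ≥ m`. -/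
theorem cone_infinite_inequality_description (t : ℕ) (ht : 1 ≤ t) (m : ℕ) (hm : 1 ≤ m) :
    coneC t m
      = { x : Fin (t + 1) → ℝ |
          (∀ i j : Fin (t + 1), i ≤ j → (j : ℕ) < t → x j ≤ x i) ∧
          (∀ i : Fin (t + 1), (i : ℕ) < t → 0 ≤ x i) ∧
          (∀ l : ℕ, l < m → 0 ≤ sprod (normalU t l) x) ∧
          (∀ l : ℕ, m ≤ l → sprod (normalU t l) x < 0) } := by
  apply Set.eq_of_subset_of_subset
  · intro x hx
    exact forward_dir t ht m hm x hx
  · rintro x ⟨hmono, hpos, hge, hlt⟩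
    have htR : (0:ℝ) < t := by exact_mod_cast (show 0 < t by omega)
    have ht0 : (t:ℝ) ≠ 0 := ne_of_gt htR
    set B : ℕ → ℝ := fun n => sprod (normalU t n) x with hB
    set q := (m-1)/t with hqdef
    set s₀ := (m-1)%t with hsdef
    have hqs : t*q + s₀ = m-1 := Nat.div_add_mod _ _
    have hs₀t : s₀ < t := Nat.mod_lt _ (by omega)
    set c : ℕ → ℝ := fun j => if j = 0 then 0 else B (m + j - 1) with hc
    set A : ℕ → ℝ := fun i => if i = t then B (m-1) / t else (c i - c (i+1)) / t with hA
    have hBdef : ∀ i : ℕ, c (i+1) = B (m+i) := by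
      intro i
      simp only [hc]
      rw [if_neg (by omega)]
      congr 1
    have hBanti : ∀ n : ℕ, B (n+1) ≤ B n := fun n => B_antitone ht x hmono hpos n
    have hA0pos : 0 < A 0 := by
      have hc1 : c 1 = B m := by
        simp only [hc]; rw [if_neg (by omega)]; congr 1
      have : A 0 = (0 - B m) / t := by
        simp only [hA]
        rw [if_neg (by omega), hc1]
        simp [hc]
      rw [this]
      apply div_pos _ htR
      have h2 : B m < 0 := hlt m le_rfl
      linarith
    have hN : ∀ kk, kk < t → ∃ N, m ≤ N ∧ N < m + t ∧ N % t = kk ∧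
        N / t = (if kk ≤ s₀ then q + 1 else q) := by
      intro kk hkk
      have e : t*(q+1) = t*q + t := by ring
      refine ⟨if kk ≤ s₀ then t*q + t + kk else t*q + kk, ?_, ?_, ?_, ?_⟩
      · split_ifs <;> omega
      · split_ifs <;> omega
      · split_ifs with h
        · rw [show t*q+t+kk = t*(q+1) + kk by omega, Nat.mul_add_mod, Nat.mod_eq_of_lt hkk]
        · rw [Nat.mul_add_mod, Nat.mod_eq_of_lt hkk]
      · split_ifs with h
        · rw [show t*q+t+kk = t*(q+1) + kk by omega, Nat.mul_add_div (show 0 < t by omega),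
            Nat.div_eq_of_lt hkk]
        · rw [Nat.mul_add_div (show 0 < t by omega), Nat.div_eq_of_lt hkk]
          omega
    have hb0bt : B (m-1) - B (m+t-1) = t * x ⟨0, by omega⟩ := by
      have e1 : m + t - 1 = (m-1) + t := by omega
      have hBm1 : B (m-1) = sprod (normalU t (m-1)) x := rfl
      have hBmt : B (m+t-1) = sprod (normalU t ((m-1)+t)) x := by rw [hB]; congr 1
      rw [hBm1, hBmt, sprod_formula' ht (m-1) x rfl rfl (by omega),
        sprod_formula' ht ((m-1)+t) x
          (by rw [Nat.add_div_right _ (show 0 < t by omega)])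
          (by rw [Nat.add_mod_right]) (by omega)]
      push_cast
      ring
    refine ⟨fun i => A (i:ℕ), ?_, ?_, ?_⟩
    · simpa using hA0pos
    · intro i
      show (0:ℝ) ≤ A (i:ℕ)
      by_cases hit : (i:ℕ) = t
      · have : A (i:ℕ) = B (m-1) / t := by rw [hit]; simp [hA]
        rw [this]
        apply div_nonneg _ htR.le
        exact hge (m-1) (by omega)
      · have hilt : (i:ℕ) < t := by have := i.isLt; omega
        by_cases hi0 : (i:ℕ) = 0
        · rw [hi0]; exact le_of_lt hA0pos
        · have : A (i:ℕ) = (c (i:ℕ) - c ((i:ℕ)+1)) / t := by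
            simp only [hA]; rw [if_neg hit]
          rw [this]
          apply div_nonneg _ htR.le
          have e1 : c (i:ℕ) = B (m + (i:ℕ) - 1) := by
            simp only [hc]; rw [if_neg hi0]
          have e2 : c ((i:ℕ)+1) = B ((m + (i:ℕ) - 1) + 1) := by
            rw [hBdef]; congr 1; omega
          rw [e1, e2]
          linarith [hBanti (m + (i:ℕ) - 1)]
    · show x = ∑ i : Fin (t+1), A (i:ℕ) • geneV t (m + (i:ℕ))
      funext k
      obtain ⟨kv, hkv⟩ := k
      have hsum : (∑ i : Fin (t+1), A (i:ℕ) • geneV t (m + (i:ℕ))) ⟨kv,hkv⟩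
          = ∑ i ∈ Finset.range (t+1), A i * geneV t (m+i) ⟨kv,hkv⟩ := by
        rw [Finset.sum_apply]
        rw [← Fin.sum_univ_eq_sum_range (fun i => A i * geneV t (m+i) ⟨kv,hkv⟩) (t+1)]
        simp
      rw [hsum]
      set w : ℕ → ℝ := fun i => geneV t (m+i) ⟨kv,hkv⟩ with hw
      have key : ∑ i ∈ Finset.range t, B (m+i) * (w (i+1) - w i)
          = t * x ⟨kv,hkv⟩ - (t * x ⟨0, by omega⟩) * w t := by
        by_cases hkvt : kv = t
        · have hfin : (⟨kv, hkv⟩ : Fin (t+1)) = ⟨t, by omega⟩ := Fin.ext (by simpa using hkvt)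
          have hwEq : ∀ i : ℕ, w i = geneV t (m+i) ⟨t, by omega⟩ := by
            intro i
            simp only [hw]
            rw [hfin]
          have hDw : ∀ i : ℕ, w (i+1) - w i = if (m+i) % t = 0 then (t:ℝ) else 0 := by
            intro i
            have e1 : m + (i+1) = (m+i-1) + 2 := by omega
            have e2 : m + i = (m+i-1) + 1 := by omega
            have := geneV_succ_sub_last (t := t) (v := m+i-1) ht
            rw [← e1, ← e2] at this
            rw [hwEq, hwEq]
            exact this
          have hterm : ∀ i ∈ Finset.range t, B (m+i) * (w (i+1) - w i)
              = ((t:ℝ) * B (m+i)) * (if (m+i) % t = 0 then 1 else 0) := by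
            intro i _
            rw [hDw i]
            split_ifs <;> ring
          rw [Finset.sum_congr rfl hterm]
          obtain ⟨N0, hN01, hN02, hN03, hN04⟩ := hN 0 (by omega)
          rw [window_sum (fun n => (t:ℝ) * B n) 0 ht N0 hN01 hN02 hN03]
          have hBN0 : B N0 = -((((q+1) + 1) * t : ℕ):ℝ) * x ⟨0, by omega⟩
              + (t:ℝ) * x ⟨0, by omega⟩ + x ⟨t, by omega⟩ := by
            rw [hB]
            exact sprod_formula' ht N0 x (by rw [hN04]; simp) hN03 (by omega)
          have hwt : w t = (((q+1) * t : ℕ) : ℝ) := by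
            have e1 : m + t - 1 = (m-1) + t := by omega
            rw [hwEq, geneV_last ht]
            congr 2
            rw [e1, Nat.add_div_right _ (show 0 < t by omega)]
          have hxk : x ⟨kv, hkv⟩ = x ⟨t, by omega⟩ := congrArg x hfin
          rw [hBN0, hwt, hxk]
          push_cast
          ring
        · have hkvlt : kv < t := by omega
          have hDw : ∀ i : ℕ, w (i+1) - w i
              = (if (m+i) % t = kv then 1 else 0) - (if (m+i) % t = 0 then 1 else 0) := by
            intro i
            have e1 : m + (i+1) = (m+i-1) + 2 := by omega
            have e2 : m + i = (m+i-1) + 1 := by omega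
            have := geneV_succ_sub (t := t) (v := m+i-1) ht (k := ⟨kv,hkv⟩) hkvlt
            rw [← e1, ← e2] at this
            simpa [hw] using this
          have hterm : ∀ i ∈ Finset.range t, B (m+i) * (w (i+1) - w i)
              = B (m+i) * (if (m+i) % t = kv then 1 else 0)
                - B (m+i) * (if (m+i) % t = 0 then 1 else 0) := by
            intro i _
            rw [hDw i]; ring
          rw [Finset.sum_congr rfl hterm, Finset.sum_sub_distrib]
          obtain ⟨Nk, hNk1, hNk2, hNk3, hNk4⟩ := hN kv hkvlt
          obtain ⟨N0, hN01, hN02, hN03, hN04⟩ := hN 0 (by omega)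
          rw [window_sum B kv ht Nk hNk1 hNk2 hNk3, window_sum B 0 ht N0 hN01 hN02 hN03]
          have hBNk : B Nk = -((((if kv ≤ s₀ then q+1 else q) + 1) * t : ℕ):ℝ) * x ⟨0, by omega⟩
              + (t:ℝ) * x ⟨kv, by omega⟩ + x ⟨t, by omega⟩ := by
            rw [hB]
            exact sprod_formula' ht Nk x hNk4 hNk3 (by omega)
          have hBN0 : B N0 = -((((q+1) + 1) * t : ℕ):ℝ) * x ⟨0, by omega⟩
              + (t:ℝ) * x ⟨0, by omega⟩ + x ⟨t, by omega⟩ := by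
            rw [hB]
            exact sprod_formula' ht N0 x (by rw [hN04]; simp) hN03 (by omega)
          have hwt : w t = if kv ≤ s₀ then (1:ℝ) else 0 := by
            have : w t = geneV t (m+t) ⟨kv, hkv⟩ := rfl
            rw [this, geneV_coord _ hkvlt]
            have e1 : m + t - 1 = (m-1) + t := by omega
            rw [e1, Nat.add_mod_right]
          rw [hBNk, hBN0, hwt]
          by_cases hcs : kv ≤ s₀
          · rw [if_pos hcs, if_pos hcs]
            push_cast
            ring
          · rw [if_neg hcs, if_neg hcs]
            push_cast
            ring
      -- assemble
      have main : (t:ℝ) * (∑ i ∈ Finset.range (t+1), A i * w i) = t * x ⟨kv, hkv⟩ := by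
        rw [Finset.mul_sum, Finset.sum_range_succ]
        have hAt : A t = B (m-1)/t := by simp [hA]
        have step : ∀ i ∈ Finset.range t, (t:ℝ) * (A i * w i)
            = ((fun i => c i * w i) i - (fun i => c i * w i) (i+1))
              + B (m+i) * (w (i+1) - w i) := by
          intro i hi
          have hit : i ≠ t := by simp at hi; omega
          have hAi : A i = (c i - c (i+1))/t := by simp only [hA]; rw [if_neg hit]
          rw [hAi, ← hBdef i]
          field_simp
          ring
        rw [Finset.sum_congr rfl step, Finset.sum_add_distrib,
          Finset.sum_range_sub' (fun i => c i * w i), key]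
        have hc0 : c 0 = 0 := by simp [hc]
        have hct : c t = B (m + t - 1) := by simp only [hc]; rw [if_neg (by omega)]
        rw [hc0, hct, hAt]
        have e : (t:ℝ) * (B (m-1)/t * w t) = B (m-1) * w t := by field_simp
        rw [e]
        linear_combination w t * hb0bt
      have := mul_left_cancel₀ ht0 main
      linarith [this]
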